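/- Let P₁ be a weakly sdf-absorbing strong C-hyperideal of H₁ which is not sdf-absorbing, and P₂ a weakly sdf-absorbing strong C-hyperideal of H₂ which is not sdf-absorbing. Then the following are equivalent: (i) P₁ × P₂ is a weakly sdf-absorbing hyperideal of H₁ × H₂ but not an sdf-absorbing hyperideal; (ii) P₁ × P₂ is a weakly sdf-absorbing hyperideal of H₁ × H₂; (iii) for all x, y ∈ H₁, x² − y² ⊆ P₁ implies 0 ∈ x² − y², and for all u, v ∈ H₂, u² − v² ⊆ P₂ implies 0 ∈ u² − v²; (iv) for all nonzero a, b ∈ H₁ × H₂, a² − b² ⊆ P₁ × P₂ implies (0,0) ∈ a² − b². -/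
import Mathlib


open Pointwise

/-- A commutative multiplicative hyperring structure on an abelian group `H`. -/
structure MulHyperring (H : Type*) [AddCommGroup H] where
  hmul : H → H → Set H
  hmul_nonempty : ∀ x y : H, (hmul x y).Nonempty
  hmul_comm : ∀ x y : H, hmul x y = hmul y x
  hmul_assoc : ∀ x y z : H, (⋃ a ∈ hmul y z, hmul x a) = ⋃ b ∈ hmul x y, hmul b z
  hmul_distrib : ∀ x y z : H, hmul x (y + z) ⊆ hmul x y + hmul x z
  hmul_neg : ∀ x y : H, hmul x (-y) = -(hmul x y)

namespace Hyper

variable {H : Type*} [AddCommGroup H] (mul : H → H → Set H)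

/-- `P` is a hyperideal. -/
def IsIdeal (P : Set H) : Prop :=
  (0 : H) ∈ P ∧ (∀ x ∈ P, ∀ y ∈ P, x - y ∈ P) ∧ ∀ r : H, ∀ x ∈ P, mul r x ⊆ P

/-- Hyperproduct `a ∘ b₁ ∘ ⋯ ∘ bₙ`. -/
def hprod : H → List H → Set H
  | a, [] => {a}
  | a, b :: l => ⋃ t ∈ mul a b, hprod t l

/-- `C` is a finite hyperproduct `c₁ ∘ ⋯ ∘ cₙ`. -/
def IsProduct (C : Set H) : Prop := ∃ (a : H) (l : List H), C = hprod mul a l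

/-- `D` is a finite (nonempty) sum of finite hyperproducts. -/
def IsSum (D : Set H) : Prop :=
  ∃ L : List (Set H), L ≠ [] ∧ (∀ C ∈ L, IsProduct mul C) ∧ D = L.sum

/-- `P` is a `𝒞`-hyperideal. -/
def IsCIdeal (P : Set H) : Prop :=
  IsIdeal mul P ∧ ∀ C : Set H, IsProduct mul C → (C ∩ P).Nonempty → C ⊆ P

/-- `P` is a strong `𝒞`-hyperideal. -/
def IsStrongCIdeal (P : Set H) : Prop :=
  IsIdeal mul P ∧ ∀ D : Set H, IsSum mul D → (D ∩ P).Nonempty → D ⊆ P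

/-- The hypersquare `x² = x ∘ x`. -/
def sq (x : H) : Set H := mul x x

/-- `P` is an sdf-absorbing hyperideal. -/
def IsSdf (P : Set H) : Prop :=
  IsIdeal mul P ∧ P ≠ Set.univ ∧
    ∀ x y : H, x ≠ 0 → y ≠ 0 → sq mul x - sq mul y ⊆ P → x - y ∈ P ∨ x + y ∈ P

/-- `P` is a weakly sdf-absorbing hyperideal. -/
def IsWeaklySdf (P : Set H) : Prop :=
  IsIdeal mul P ∧ P ≠ Set.univ ∧
    ∀ x y : H, x ≠ 0 → y ≠ 0 → (0 : H) ∉ sq mul x - sq mul y →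
      sq mul x - sq mul y ⊆ P → x - y ∈ P ∨ x + y ∈ P

/-- `P` is a prime hyperideal. -/
def IsPrime (P : Set H) : Prop :=
  IsIdeal mul P ∧ P ≠ Set.univ ∧ ∀ x y : H, mul x y ⊆ P → x ∈ P ∨ y ∈ P

/-- The radical: intersection of the prime hyperideals containing `P`. -/
def rad (P : Set H) : Set H := ⋂₀ {Q : Set H | IsPrime mul Q ∧ P ⊆ Q}

/-- `hpow mul x n` is the hyperpower `x^(n+1)`. -/
def hpow (x : H) (n : ℕ) : Set H := hprod mul x (List.replicate n x)

/-- `x` is nilpotent: `0 ∈ xⁿ` for some `n`. -/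
def IsNilpotent (x : H) : Prop := ∃ n : ℕ, (0 : H) ∈ hpow mul x n

/-- `x` is a regular element: `x ∈ x² ∘ y` for some `y`. -/
def IsRegularElem (x : H) : Prop := ∃ y : H, x ∈ ⋃ t ∈ sq mul x, mul t y

/-- The hyperideal generated by a set `S`. -/
def span (S : Set H) : Set H := ⋂₀ {Q : Set H | IsIdeal mul Q ∧ S ⊆ Q}

/-- `P` is a maximal hyperideal. -/
def IsMaximal (P : Set H) : Prop :=
  IsIdeal mul P ∧ P ≠ Set.univ ∧
    ∀ B : Set H, IsIdeal mul B → P ⊆ B → B = P ∨ B = Set.univ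

end Hyper

/-- Componentwise hypermultiplication on a product. -/
def prodMul {H₁ H₂ : Type*} (m₁ : H₁ → H₁ → Set H₁) (m₂ : H₂ → H₂ → Set H₂) :
    H₁ × H₂ → H₁ × H₂ → Set (H₁ × H₂) :=
  fun a b => (m₁ a.1 b.1) ×ˢ (m₂ a.2 b.2)

lemma prod_sub_prod' {H₁ H₂ : Type*} [AddCommGroup H₁] [AddCommGroup H₂]
    (S₁ T₁ : Set H₁) (S₂ T₂ : Set H₂) :
    (S₁ ×ˢ S₂) - (T₁ ×ˢ T₂) = (S₁ - T₁) ×ˢ (S₂ - T₂) := by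
  apply Set.Subset.antisymm
  · rintro ⟨p, q⟩ hm
    obtain ⟨⟨a, b⟩, hab, ⟨c, d⟩, hcd, he⟩ := Set.mem_sub.mp hm
    exact ⟨congrArg Prod.fst he ▸ Set.sub_mem_sub hab.1 hcd.1,
      congrArg Prod.snd he ▸ Set.sub_mem_sub hab.2 hcd.2⟩
  · rintro ⟨p, q⟩ ⟨hp, hq⟩
    obtain ⟨a, ha, c, hc, h1⟩ := Set.mem_sub.mp hp
    obtain ⟨b, hb, d, hd, h2⟩ := Set.mem_sub.mp hq
    refine Set.mem_sub.mpr ⟨(a, b), ⟨ha, hb⟩, (c, d), ⟨hc, hd⟩, ?_⟩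
    exact Prod.ext h1 h2

/-- for weakly sdf-absorbing strong `𝒞`-hyperideals `P₁, P₂` which are
not sdf-absorbing, the four listed conditions are equivalent. -/
theorem stmt19 {H₁ H₂ : Type*} [AddCommGroup H₁] [AddCommGroup H₂]
    (M₁ : MulHyperring H₁) (M₂ : MulHyperring H₂)
    (P₁ : Set H₁) (P₂ : Set H₂)
    (h₁S : Hyper.IsStrongCIdeal M₁.hmul P₁) (h₁w : Hyper.IsWeaklySdf M₁.hmul P₁)
    (h₁n : ¬ Hyper.IsSdf M₁.hmul P₁)
    (h₂S : Hyper.IsStrongCIdeal M₂.hmul P₂) (h₂w : Hyper.IsWeaklySdf M₂.hmul P₂)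
    (h₂n : ¬ Hyper.IsSdf M₂.hmul P₂) :
    ((Hyper.IsWeaklySdf (prodMul M₁.hmul M₂.hmul) (P₁ ×ˢ P₂) ∧
        ¬ Hyper.IsSdf (prodMul M₁.hmul M₂.hmul) (P₁ ×ˢ P₂)) ↔
      Hyper.IsWeaklySdf (prodMul M₁.hmul M₂.hmul) (P₁ ×ˢ P₂)) ∧
    (Hyper.IsWeaklySdf (prodMul M₁.hmul M₂.hmul) (P₁ ×ˢ P₂) ↔
      ((∀ x y : H₁, Hyper.sq M₁.hmul x - Hyper.sq M₁.hmul y ⊆ P₁ →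
          (0 : H₁) ∈ Hyper.sq M₁.hmul x - Hyper.sq M₁.hmul y) ∧
        ∀ u v : H₂, Hyper.sq M₂.hmul u - Hyper.sq M₂.hmul v ⊆ P₂ →
          (0 : H₂) ∈ Hyper.sq M₂.hmul u - Hyper.sq M₂.hmul v)) ∧
    (((∀ x y : H₁, Hyper.sq M₁.hmul x - Hyper.sq M₁.hmul y ⊆ P₁ →
          (0 : H₁) ∈ Hyper.sq M₁.hmul x - Hyper.sq M₁.hmul y) ∧
        ∀ u v : H₂, Hyper.sq M₂.hmul u - Hyper.sq M₂.hmul v ⊆ P₂ →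
          (0 : H₂) ∈ Hyper.sq M₂.hmul u - Hyper.sq M₂.hmul v) ↔
      ∀ a b : H₁ × H₂, a ≠ 0 → b ≠ 0 →
        Hyper.sq (prodMul M₁.hmul M₂.hmul) a - Hyper.sq (prodMul M₁.hmul M₂.hmul) b ⊆
          P₁ ×ˢ P₂ →
        (0 : H₁ × H₂) ∈
          Hyper.sq (prodMul M₁.hmul M₂.hmul) a - Hyper.sq (prodMul M₁.hmul M₂.hmul) b) := by
  classical
  obtain ⟨I₁, ne₁, w₁⟩ := h₁w
  obtain ⟨I₂, ne₂, w₂⟩ := h₂w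
  -- key rewriting of squares in the product
  have sqprod : ∀ a b : H₁ × H₂,
      Hyper.sq (prodMul M₁.hmul M₂.hmul) a - Hyper.sq (prodMul M₁.hmul M₂.hmul) b =
        (Hyper.sq M₁.hmul a.1 - Hyper.sq M₁.hmul b.1) ×ˢ
          (Hyper.sq M₂.hmul a.2 - Hyper.sq M₂.hmul b.2) := by
    intro a b
    exact prod_sub_prod' _ _ _ _
  have sqne₁ : ∀ x y : H₁, (Hyper.sq M₁.hmul x - Hyper.sq M₁.hmul y).Nonempty := by
    intro x y
    obtain ⟨s, hs⟩ := M₁.hmul_nonempty x x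
    obtain ⟨t, ht⟩ := M₁.hmul_nonempty y y
    exact ⟨s - t, Set.sub_mem_sub hs ht⟩
  have sqne₂ : ∀ x y : H₂, (Hyper.sq M₂.hmul x - Hyper.sq M₂.hmul y).Nonempty := by
    intro x y
    obtain ⟨s, hs⟩ := M₂.hmul_nonempty x x
    obtain ⟨t, ht⟩ := M₂.hmul_nonempty y y
    exact ⟨s - t, Set.sub_mem_sub hs ht⟩
  -- witnesses for failure of sdf in each factor
  have hw₁ : ∃ x y : H₁, x ≠ 0 ∧ y ≠ 0 ∧
      (Hyper.sq M₁.hmul x - Hyper.sq M₁.hmul y ⊆ P₁) ∧ x - y ∉ P₁ ∧ x + y ∉ P₁ := by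
    by_contra h
    push_neg at h
    refine h₁n ⟨I₁, ne₁, fun x y hx hy hs => ?_⟩
    by_cases h' : x - y ∈ P₁
    · exact Or.inl h'
    · exact Or.inr (h x y hx hy hs h')
  have hw₂ : ∃ x y : H₂, x ≠ 0 ∧ y ≠ 0 ∧
      (Hyper.sq M₂.hmul x - Hyper.sq M₂.hmul y ⊆ P₂) ∧ x - y ∉ P₂ ∧ x + y ∉ P₂ := by
    by_contra h
    push_neg at h
    refine h₂n ⟨I₂, ne₂, fun x y hx hy hs => ?_⟩
    by_cases h' : x - y ∈ P₂
    · exact Or.inl h'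
    · exact Or.inr (h x y hx hy hs h')
  obtain ⟨x₁, y₁, hx₁, hy₁, hs₁, hm₁, hp₁⟩ := hw₁
  obtain ⟨x₂, y₂, hx₂, hy₂, hs₂, hm₂, hp₂⟩ := hw₂
  -- the product is never sdf
  have notSdf : ¬ Hyper.IsSdf (prodMul M₁.hmul M₂.hmul) (P₁ ×ˢ P₂) := by
    rintro ⟨_, _, hB⟩
    have ha : (x₁, x₂) ≠ (0 : H₁ × H₂) := fun h => hx₁ (congrArg Prod.fst h)
    have hb : (y₁, y₂) ≠ (0 : H₁ × H₂) := fun h => hy₁ (congrArg Prod.fst h)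
    have hsub : Hyper.sq (prodMul M₁.hmul M₂.hmul) (x₁, x₂) -
        Hyper.sq (prodMul M₁.hmul M₂.hmul) (y₁, y₂) ⊆ P₁ ×ˢ P₂ := by
      rw [sqprod]
      exact Set.prod_mono hs₁ hs₂
    rcases hB (x₁, x₂) (y₁, y₂) ha hb hsub with h | h
    · exact hm₁ h.1
    · exact hp₁ h.1
  -- name conditions
  set C₁ : Prop := ∀ x y : H₁, Hyper.sq M₁.hmul x - Hyper.sq M₁.hmul y ⊆ P₁ →
      (0 : H₁) ∈ Hyper.sq M₁.hmul x - Hyper.sq M₁.hmul y with hC₁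
  set C₂ : Prop := ∀ u v : H₂, Hyper.sq M₂.hmul u - Hyper.sq M₂.hmul v ⊆ P₂ →
      (0 : H₂) ∈ Hyper.sq M₂.hmul u - Hyper.sq M₂.hmul v with hC₂
  -- (ii) → (iii)
  have A_to_C : Hyper.IsWeaklySdf (prodMul M₁.hmul M₂.hmul) (P₁ ×ˢ P₂) → C₁ ∧ C₂ := by
    rintro ⟨_, _, hA⟩
    constructor
    · intro x y hsub
      by_contra h0
      have ha : (x, x₂) ≠ (0 : H₁ × H₂) := fun h => hx₂ (congrArg Prod.snd h)
      have hb : (y, y₂) ≠ (0 : H₁ × H₂) := fun h => hy₂ (congrArg Prod.snd h)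
      have h0' : (0 : H₁ × H₂) ∉ Hyper.sq (prodMul M₁.hmul M₂.hmul) (x, x₂) -
          Hyper.sq (prodMul M₁.hmul M₂.hmul) (y, y₂) := by
        rw [sqprod]
        exact fun h => h0 h.1
      have hsub' : Hyper.sq (prodMul M₁.hmul M₂.hmul) (x, x₂) -
          Hyper.sq (prodMul M₁.hmul M₂.hmul) (y, y₂) ⊆ P₁ ×ˢ P₂ := by
        rw [sqprod]
        exact Set.prod_mono hsub hs₂
      rcases hA (x, x₂) (y, y₂) ha hb h0' hsub' with h | h
      · exact hm₂ h.2
      · exact hp₂ h.2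
    · intro u v hsub
      by_contra h0
      have ha : (x₁, u) ≠ (0 : H₁ × H₂) := fun h => hx₁ (congrArg Prod.fst h)
      have hb : (y₁, v) ≠ (0 : H₁ × H₂) := fun h => hy₁ (congrArg Prod.fst h)
      have h0' : (0 : H₁ × H₂) ∉ Hyper.sq (prodMul M₁.hmul M₂.hmul) (x₁, u) -
          Hyper.sq (prodMul M₁.hmul M₂.hmul) (y₁, v) := by
        rw [sqprod]
        exact fun h => h0 h.2
      have hsub' : Hyper.sq (prodMul M₁.hmul M₂.hmul) (x₁, u) -
          Hyper.sq (prodMul M₁.hmul M₂.hmul) (y₁, v) ⊆ P₁ ×ˢ P₂ := by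
        rw [sqprod]
        exact Set.prod_mono hs₁ hsub
      rcases hA (x₁, u) (y₁, v) ha hb h0' hsub' with h | h
      · exact hm₁ h.1
      · exact hp₁ h.1
  -- (iii) → (ii)
  have C_to_A : C₁ ∧ C₂ → Hyper.IsWeaklySdf (prodMul M₁.hmul M₂.hmul) (P₁ ×ˢ P₂) := by
    rintro ⟨c₁, c₂⟩
    refine ⟨⟨⟨I₁.1, I₂.1⟩, ?_, ?_⟩, ?_, ?_⟩
    · rintro ⟨a₁, a₂⟩ ha ⟨b₁, b₂⟩ hb
      exact ⟨I₁.2.1 a₁ ha.1 b₁ hb.1, I₂.2.1 a₂ ha.2 b₂ hb.2⟩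
    · rintro ⟨r₁, r₂⟩ ⟨a₁, a₂⟩ ha ⟨p, q⟩ hpq
      exact ⟨I₁.2.2 r₁ a₁ ha.1 hpq.1, I₂.2.2 r₂ a₂ ha.2 hpq.2⟩
    · intro h
      obtain ⟨z, hz⟩ := (Set.ne_univ_iff_exists_notMem P₁).mp ne₁
      exact hz ((Set.eq_univ_iff_forall.mp h (z, 0)).1)
    · intro a b _ _ h0 hsub
      exfalso
      apply h0
      rw [sqprod] at hsub ⊢
      have hsub₁ : Hyper.sq M₁.hmul a.1 - Hyper.sq M₁.hmul b.1 ⊆ P₁ := by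
        intro p hp
        obtain ⟨q, hq⟩ := sqne₂ a.2 b.2
        exact (hsub (Set.mk_mem_prod hp hq)).1
      have hsub₂ : Hyper.sq M₂.hmul a.2 - Hyper.sq M₂.hmul b.2 ⊆ P₂ := by
        intro q hq
        obtain ⟨p, hp⟩ := sqne₁ a.1 b.1
        exact (hsub (Set.mk_mem_prod hp hq)).2
      exact ⟨c₁ a.1 b.1 hsub₁, c₂ a.2 b.2 hsub₂⟩
  refine ⟨⟨fun h => h.1, fun h => ⟨h, notSdf⟩⟩, ⟨A_to_C, C_to_A⟩, ?_, ?_⟩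
  · rintro ⟨c₁, c₂⟩ a b _ _ hsub
    rw [sqprod] at hsub ⊢
    have hsub₁ : Hyper.sq M₁.hmul a.1 - Hyper.sq M₁.hmul b.1 ⊆ P₁ := by
      intro p hp
      obtain ⟨q, hq⟩ := sqne₂ a.2 b.2
      exact (hsub (Set.mk_mem_prod hp hq)).1
    have hsub₂ : Hyper.sq M₂.hmul a.2 - Hyper.sq M₂.hmul b.2 ⊆ P₂ := by
      intro q hq
      obtain ⟨p, hp⟩ := sqne₁ a.1 b.1
      exact (hsub (Set.mk_mem_prod hp hq)).2
    exact ⟨c₁ a.1 b.1 hsub₁, c₂ a.2 b.2 hsub₂⟩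
  · intro h
    constructor
    · intro x y hsub
      have ha : (x, x₂) ≠ (0 : H₁ × H₂) := fun h' => hx₂ (congrArg Prod.snd h')
      have hb : (y, y₂) ≠ (0 : H₁ × H₂) := fun h' => hy₂ (congrArg Prod.snd h')
      have hsub' : Hyper.sq (prodMul M₁.hmul M₂.hmul) (x, x₂) -
          Hyper.sq (prodMul M₁.hmul M₂.hmul) (y, y₂) ⊆ P₁ ×ˢ P₂ := by
        rw [sqprod]
        exact Set.prod_mono hsub hs₂
      have := h (x, x₂) (y, y₂) ha hb hsub'
      rw [sqprod] at this
      exact this.1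
    · intro u v hsub
      have ha : (x₁, u) ≠ (0 : H₁ × H₂) := fun h' => hx₁ (congrArg Prod.fst h')
      have hb : (y₁, v) ≠ (0 : H₁ × H₂) := fun h' => hy₁ (congrArg Prod.fst h')
      have hsub' : Hyper.sq (prodMul M₁.hmul M₂.hmul) (x₁, u) -
          Hyper.sq (prodMul M₁.hmul M₂.hmul) (y₁, v) ⊆ P₁ ×ˢ P₂ := by
        rw [sqprod]
        exact Set.prod_mono hs₁ hsub
      have := h (x₁, u) (y₁, v) ha hb hsub'
      rw [sqprod] at this
      exact this.2
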